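/- Let s, x0, x1, x be nonzero elements of a field with q = s^2, such that x^2 ≠ 1, (1/x)^2 ≠ 1 substitutions are valid, x ≠ s^{±1}, s x ≠ 1, x/s ≠ 1. Define ω(y) = y(1 + s y)/(s(1 - y^2)(1 - s y)) and ch(y) = y + 1/y. Then the following rational identity holds: Σ_{ε ∈ {+1,-1}} ω(x^ε) · ( -x^{-ε}(x0 + s x^ε / x0)(x1 + s x^ε / x1) + s·ch(x0)·ch(x1) ) = -( x0 x1 / s + s/(x0 x1) ). -/

import Mathlib

/-- weight function of the genus-two skein algebra difference operators -/
def skeinOmega {K : Type*} [Field K] (s y : K) : K :=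
  y * (1 + s * y) / (s * (1 - y ^ 2) * (1 - s * y))

theorem stmt_3 {K : Type*} [Field K] (s q x0 x1 x : K) (hs : s ≠ 0) (hsq : s ^ 2 = q)
    (hx0 : x0 ≠ 0) (hx1 : x1 ≠ 0) (hx : x ≠ 0) (h1 : x ^ 2 ≠ 1)
    (h2 : x ≠ s) (h3 : x ≠ s⁻¹) (h4 : s * x ≠ 1) :
    skeinOmega s x * (-(1 / x) * (x0 + s * x / x0) * (x1 + s * x / x1)
        + s * (x0 + 1 / x0) * (x1 + 1 / x1))
      + skeinOmega s (1 / x) * (-x * (x0 + s * (1 / x) / x0) * (x1 + s * (1 / x) / x1)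
        + s * (x0 + 1 / x0) * (x1 + 1 / x1))
    = -(x0 * x1 / s + s / (x0 * x1)) := by
  have hA : 1 - x ^ 2 ≠ 0 := fun h => h1 (by linear_combination -h)
  have hA' : x ^ 2 - 1 ≠ 0 := fun h => h1 (by linear_combination h)
  have hB : 1 - s * x ≠ 0 := fun h => h4 (by linear_combination -h)
  have hxs : x - s ≠ 0 := sub_ne_zero.mpr h2
  have e2 : skeinOmega s (1 / x) = x * (x + s) / (s * (x ^ 2 - 1) * (x - s)) := by
    unfold skeinOmega
    rw [div_eq_div_iff]
    · field_simp
    · apply mul_ne_zero (mul_ne_zero hs _) _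
      · intro h
        apply hA'
        have hh : x ^ 2 * (1 - (1/x)^2) = x ^ 2 - 1 := by field_simp
        rw [h, mul_zero] at hh
        linear_combination -hh
      · intro h
        apply hxs
        have hh : x * (1 - s * (1/x)) = x - s := by field_simp
        rw [h, mul_zero] at hh
        linear_combination -hh
    · exact mul_ne_zero (mul_ne_zero hs hA') hxs
  rw [e2]
  unfold skeinOmega
  have hE : x * s * x0 ^ 2 * x1 ^ 2 + (-(x ^ 2 * s ^ 2 * x0 ^ 2 * x1 ^ 2)
      - x ^ 3 * s * x0 ^ 2 * x1 ^ 2) + x ^ 4 * s ^ 2 * x0 ^ 2 * x1 ^ 2 ≠ 0 := by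
    have : x * s * x0 ^ 2 * x1 ^ 2 + (-(x ^ 2 * s ^ 2 * x0 ^ 2 * x1 ^ 2)
        - x ^ 3 * s * x0 ^ 2 * x1 ^ 2) + x ^ 4 * s ^ 2 * x0 ^ 2 * x1 ^ 2
        = x * s * x0 ^ 2 * x1 ^ 2 * ((1 - x ^ 2) * (1 - s * x)) := by ring
    rw [this]
    exact mul_ne_zero (mul_ne_zero (mul_ne_zero (mul_ne_zero hx hs) (pow_ne_zero _ hx0))
      (pow_ne_zero _ hx1)) (mul_ne_zero hA hB)
  have hF : x ^ 2 * s ^ 2 * x0 ^ 2 * x1 ^ 2 + (-(x ^ 3 * s * x0 ^ 2 * x1 ^ 2)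
      - x ^ 4 * s ^ 2 * x0 ^ 2 * x1 ^ 2) + x ^ 5 * s * x0 ^ 2 * x1 ^ 2 ≠ 0 := by
    have : x ^ 2 * s ^ 2 * x0 ^ 2 * x1 ^ 2 + (-(x ^ 3 * s * x0 ^ 2 * x1 ^ 2)
        - x ^ 4 * s ^ 2 * x0 ^ 2 * x1 ^ 2) + x ^ 5 * s * x0 ^ 2 * x1 ^ 2
        = x ^ 2 * s * x0 ^ 2 * x1 ^ 2 * ((x ^ 2 - 1) * (x - s)) := by ring
    rw [this]
    exact mul_ne_zero (mul_ne_zero (mul_ne_zero (mul_ne_zero (pow_ne_zero _ hx) hs)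
      (pow_ne_zero _ hx0)) (pow_ne_zero _ hx1)) (mul_ne_zero hA' hxs)
  have hD1 : s * (1 - x ^ 2) * (1 - s * x) * (x * x0 * x1 * (x0 * x1)) ≠ 0 := by
    apply mul_ne_zero (mul_ne_zero (mul_ne_zero hs hA) hB)
    apply mul_ne_zero (mul_ne_zero (mul_ne_zero hx hx0) hx1) (mul_ne_zero hx0 hx1)
  have hD2 : s * (x ^ 2 - 1) * (x - s) * (x * x0 * (x * x1) * (x0 * x1)) ≠ 0 := by
    apply mul_ne_zero (mul_ne_zero (mul_ne_zero hs hA') hxs)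
    apply mul_ne_zero (mul_ne_zero (mul_ne_zero hx hx0) (mul_ne_zero hx hx1)) (mul_ne_zero hx0 hx1)
  have hB' : 1 - x * s ≠ 0 := by rwa [mul_comm]
  field_simp
  ring
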